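/- If a nowhere-vanishing spinor field φ on a Spin^c manifold satisfies ∇_X φ = −E(X)·φ for all vector fields X, where E is a field of endomorphisms of TM, then the symmetric part of E equals ℓ^φ and the skew-symmetric part of E equals q^φ. -/

import Mathlib

/-- If a nowhere-vanishing spinor field `φ` satisfies `∇_X φ = −E(X)·φ`
for a field `E` of endomorphisms of `TM`, then the symmetric part of `E` is the
energy–momentum tensor `ℓ^φ` and the skew-symmetric part of `E` is `q^φ`.

Pointwise model: `V` is the tangent space, `H` the spinor fibre, `cl` Clifford
multiplication (skew-Hermitian, Clifford relation), `φ : M → H` the spinor field and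
`d x : V →ₗ H` its covariant derivative at `x` (as a tensorial map in the direction). -/
theorem stmt_5 {M V H : Type*} [NormedAddCommGroup V] [InnerProductSpace ℝ V]
    [NormedAddCommGroup H] [InnerProductSpace ℂ H]
    (cl : V →ₗ[ℝ] H →ₗ[ℂ] H)
    (hclifford : ∀ (v w : V) (ξ : H),
      cl v (cl w ξ) + cl w (cl v ξ) = -(((2 * (inner ℝ v w : ℝ)) : ℂ)) • ξ)
    (hskew : ∀ (v : V) (ξ₁ ξ₂ : H), (inner ℂ (cl v ξ₁) ξ₂ : ℂ) = - inner ℂ ξ₁ (cl v ξ₂))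
    (φ : M → H) (hφ : ∀ x, φ x ≠ 0)
    (d : M → (V →ₗ[ℝ] H)) (E : M → (V →ₗ[ℝ] V))
    (hE : ∀ x v, d x v = - cl (E x v) (φ x)) :
    -- the symmetric part of E is ℓ^φ …
    (∀ x v w, (1 / 2) * ((inner ℝ (E x v) w : ℝ) + (inner ℝ v (E x w) : ℝ)) =
        (1 / 2) * ((inner ℂ (φ x) (cl v (d x w) + cl w (d x v)) : ℂ).re) / ‖φ x‖ ^ 2)
    -- … and the skew-symmetric part of E is q^φ
    ∧ (∀ x v w, (1 / 2) * ((inner ℝ (E x v) w : ℝ) - (inner ℝ v (E x w) : ℝ)) =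
        (1 / 2) * ((inner ℂ (φ x) (cl w (d x v) - cl v (d x w)) : ℂ).re) / ‖φ x‖ ^ 2) := by
  -- key pointwise identity
  have key : ∀ x (v a : V),
      (inner ℂ (φ x) (cl v (cl a (φ x))) : ℂ).re = -((inner ℝ v a : ℝ) * ‖φ x‖ ^ 2) := by
    intro x v a
    set ξ := φ x with hξ
    have h1 : (inner ℂ ξ (cl v (cl a ξ)) : ℂ) = - inner ℂ (cl v ξ) (cl a ξ) := by
      rw [hskew]; ring
    have h2 : (inner ℂ ξ (cl a (cl v ξ)) : ℂ) = - inner ℂ (cl a ξ) (cl v ξ) := by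
      rw [hskew]; ring
    have hsum : (inner ℂ ξ (cl v (cl a ξ) + cl a (cl v ξ)) : ℂ)
        = -(((2 * (inner ℝ v a : ℝ)) : ℂ)) * (inner ℂ ξ ξ : ℂ) := by
      rw [hclifford, inner_smul_right]
    rw [inner_add_right, h1, h2] at hsum
    have hconj : (inner ℂ (cl a ξ) (cl v ξ) : ℂ) = starRingEnd ℂ (inner ℂ (cl v ξ) (cl a ξ)) :=
      (inner_conj_symm _ _).symm
    have h3 : (inner ℂ ξ ξ : ℂ) = ((‖ξ‖ ^ 2 : ℝ) : ℂ)     := by rw [inner_self_eq_norm_sq_to_K]; norm_cast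
    have h4 : (-(2 * ((inner ℝ v a : ℝ) : ℂ))) * ((‖ξ‖ ^ 2 : ℝ) : ℂ)
        = ((-(2 * (inner ℝ v a : ℝ) * ‖ξ‖ ^ 2) : ℝ) : ℂ) := by push_cast; ring
    rw [h3, h4, hconj] at hsum
    have hre' := congrArg Complex.re hsum
    simp only [Complex.add_re, Complex.neg_re, Complex.conj_re, Complex.ofReal_re] at hre'
    have hre : (inner ℂ (cl v ξ) (cl a ξ) : ℂ).re = (inner ℝ v a : ℝ) * ‖ξ‖ ^ 2 := by
      linarith
    rw [h1, Complex.neg_re, hre]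
  constructor <;> intro x v w <;>
  · have hn : (‖φ x‖ : ℝ) ^ 2 ≠ 0 := pow_ne_zero 2 (norm_ne_zero_iff.mpr (hφ x))
    rw [hE, hE]
    simp only [map_neg, inner_add_right, inner_sub_right, inner_neg_right,
      Complex.add_re, Complex.sub_re, Complex.neg_re, key]
    rw [eq_div_iff hn]
    rw [real_inner_comm (E x v) w, real_inner_comm (E x w) v]
    ring
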